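/- Let E_3 be the two-dimensional complex evolution algebra with structural matrix ((1,1),(−1,−1)) (i.e. e₁e₁ = e₁ + e₂, e₂e₂ = −e₁ − e₂). A linear map P : ℂ² → ℂ² is a Rota–Baxter operator of weight 0 on E_3 if and only if there exists a ∈ ℂ such that P has matrix ((a, a),(−a, −a)) or matrix ((a, −a),(−a, a)). -/
import Mathlib


/-- The evolution-algebra product on `ℂ²` determined by a structural matrix `A`:
`e_i · e_i = a_{i1} e₁ + a_{i2} e₂` and `e₁ · e₂ = e₂ · e₁ = 0`. -/
noncomputable def evMulC (A : Matrix (Fin 2) (Fin 2) ℂ) (x y : Fin 2 → ℂ) : Fin 2 → ℂ :=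
  fun k => x 0 * y 0 * A 0 k + x 1 * y 1 * A 1 k

/-- `P` is a Rota–Baxter operator of weight `lam` on the evolution algebra with structural
matrix `A`: `P(x)·P(y) = P(x·P(y) + P(x)·y + lam x·y)` for all `x, y`. -/
def IsRotaBaxter (A : Matrix (Fin 2) (Fin 2) ℂ) (lam : ℂ)
    (P : (Fin 2 → ℂ) →ₗ[ℂ] (Fin 2 → ℂ)) : Prop :=
  ∀ x y : Fin 2 → ℂ,
    evMulC A (P x) (P y) = P (evMulC A x (P y) + evMulC A (P x) y + lam • evMulC A x y)

/-- Rota–Baxter operators of weight 0 on `E₃` (`e₁e₁ = e₁+e₂, e₂e₂ = -e₁-e₂`)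
are exactly those with matrix `((a,a),(-a,-a))` or `((a,-a),(-a,a))`. -/
theorem rb_weight0_E3 (P : (Fin 2 → ℂ) →ₗ[ℂ] (Fin 2 → ℂ)) :
    IsRotaBaxter !![1, 1; -1, -1] 0 P ↔
      ∃ a : ℂ,
        (P ![1, 0] = ![a, a] ∧ P ![0, 1] = ![-a, -a]) ∨
        (P ![1, 0] = ![a, -a] ∧ P ![0, 1] = ![-a, a]) := by
  have hdec : ∀ v : Fin 2 → ℂ, P v = v 0 • P ![1,0] + v 1 • P ![0,1] := by
    intro v
    have hv : v = v 0 • ![(1:ℂ),0] + v 1 • ![(0:ℂ),1] := by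
      funext k; fin_cases k <;> simp
    conv_lhs => rw [hv]
    rw [map_add, map_smul, map_smul]
  constructor
  · intro h
    set a := P ![1,0] 0 with ha
    set b := P ![1,0] 1 with hb
    set c := P ![0,1] 0 with hc
    set d := P ![0,1] 1 with hd
    have E1 : a^2 - b^2 = 2*a*(a+c) := by
      have := congrFun (h ![1,0] ![1,0]) 0
      rw [hdec (evMulC _ _ _ + _ + _)] at this
      simp [evMulC, ← ha, ← hb, ← hc, ← hd] at this
      linear_combination this
    have E2 : a^2 - b^2 = 2*a*(b+d) := by
      have := congrFun (h ![1,0] ![1,0]) 1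
      rw [hdec (evMulC _ _ _ + _ + _)] at this
      simp [evMulC, ← ha, ← hb, ← hc, ← hd] at this
      linear_combination this
    have E3 : c^2 - d^2 = -2*d*(a+c) := by
      have := congrFun (h ![0,1] ![0,1]) 0
      rw [hdec (evMulC _ _ _ + _ + _)] at this
      simp [evMulC, ← ha, ← hb, ← hc, ← hd] at this
      linear_combination this
    have E5 : a*c - b*d = (c-b)*(a+c) := by
      have := congrFun (h ![1,0] ![0,1]) 0
      rw [hdec (evMulC _ _ _ + _ + _)] at this
      simp [evMulC, ← ha, ← hb, ← hc, ← hd] at this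
      linear_combination this
    have E6 : a*c - b*d = (c-b)*(b+d) := by
      have := congrFun (h ![1,0] ![0,1]) 1
      rw [hdec (evMulC _ _ _ + _ + _)] at this
      simp [evMulC, ← ha, ← hb, ← hc, ← hd] at this
      linear_combination this
    have huw : a + c = b + d := by
      by_contra hne
      have hsub : a + c - (b + d) ≠ 0 := fun hz => hne (by linear_combination hz)
      have ha0 : a = 0 := by
        have h2 : 2 * a * (a + c - (b + d)) = 0 := by linear_combination E2 - E1
        rcases mul_eq_zero.mp h2 with h3 | h3
        · rcases mul_eq_zero.mp h3 with h4 | h4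
          · exact absurd h4 two_ne_zero
          · exact h4
        · exact absurd h3 hsub
      have hcb : c = b := by
        have h2 : (c - b) * (a + c - (b + d)) = 0 := by linear_combination E6 - E5
        rcases mul_eq_zero.mp h2 with h3 | h3
        · linear_combination h3
        · exact absurd h3 hsub
      have hb0 : b = 0 := by
        have h2 : b ^ 2 = 0 := by linear_combination -E1 - (a + 2*c) * ha0
        exact pow_eq_zero_iff two_ne_zero |>.mp h2
      have hc0 : c = 0 := hcb.trans hb0
      have hd0 : d = 0 := by
        have h2 : d ^ 2 = 0 := by linear_combination -E3 + (c + 2*d) * hc0 + 2*d*ha0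
        exact pow_eq_zero_iff two_ne_zero |>.mp h2
      exact hne (by rw [ha0, hc0, hb0, hd0])
    have ht2 : (a + c) ^ 2 = 0 := by
      linear_combination (-1 : ℂ) * E1 - E5 + b * huw
    have ht : a + c = 0 := pow_eq_zero_iff two_ne_zero |>.mp ht2
    have hbd : b + d = 0 := by linear_combination ht - huw
    have hc' : c = -a := by linear_combination ht
    have hd' : d = -b := by linear_combination hbd
    have hb2 : (b - a) * (b + a) = 0 := by
      linear_combination (-1 : ℂ) * E1 - 2 * a * ht
    refine ⟨a, ?_⟩
    rcases mul_eq_zero.mp hb2 with hba | hba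
    · have hba' : b = a := by linear_combination hba
      left
      constructor
      · funext k; fin_cases k
        · simp [← ha]
        · simp [← hb, hba']
      · funext k; fin_cases k
        · simp [← hc, hc']
        · simp [← hd, hd', hba']
    · have hba' : b = -a := by linear_combination hba
      right
      constructor
      · funext k; fin_cases k
        · simp [← ha]
        · simp [← hb, hba']
      · funext k; fin_cases k
        · simp [← hc, hc']
        · simp [← hd, hd', hba']
  · rintro ⟨a, ⟨h1, h2⟩ | ⟨h1, h2⟩⟩ <;>
    · intro x y
      rw [hdec x, hdec y, hdec (evMulC _ _ _ + _ + _)]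
      funext k
      fin_cases k <;>
        simp [evMulC, h1, h2] <;> ring
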